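/- arXiv:1609.07356 — 3 statements merged into one kernel-verified Lean document; each statement's English description precedes it below -/
import Mathlib

section
/- The maps d satisfy d ∘ d = 0; that is, for every d ≥ 2, the composite F_d → F_{d-1} → F_{d-2} of the two differentials is the zero map, so F is a chain complex of free S-modules. -/
open Classical MvPolynomial Finsupp TensorProduct

set_option maxHeartbeats 1600000

noncomputable section

namespace EdgeRes

/-- A "cell" `(σ, τ)`: a pair of finite sets of vertices, representing the symbol `[σ|τ]`. -/
abbrev Cell (n : ℕ) := Finset (Fin n) × Finset (Fin n)

/-- The cointerval graph of the intervals `[a i, b i]`: distinct vertices are adjacent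
iff the corresponding closed intervals are disjoint. -/
def cigraph (n : ℕ) (a b : Fin n → ℝ) : SimpleGraph (Fin n) where
  Adj i j := i ≠ j ∧ Disjoint (Set.Icc (a i) (b i)) (Set.Icc (a j) (b j))
  symm := by constructor; intro i j h; exact ⟨h.1.symm, h.2.symm⟩
  loopless := by constructor; intro i h; exact h.1 rfl

variable {n : ℕ}

/-- The homological degree of a cell: `|σ| + |τ| - 1`. -/
def cellDeg (e : Cell n) : ℕ := e.1.card + e.2.card - 1

/-- `e = (σ, τ)` is a basis cell: either the degree-0 cell `(∅, ∅)` (representing `1 ∈ B₀`),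
or `σ, τ` are disjoint and nonempty, `max σ < min τ`, and every `i ∈ σ` is adjacent
to `min τ` in `G`. -/
def IsBasisCell (G : SimpleGraph (Fin n)) (e : Cell n) : Prop :=
  e = (∅, ∅) ∨
  (e.1.Nonempty ∧ e.2.Nonempty ∧ Disjoint e.1 e.2 ∧
   (∀ i ∈ e.1, ∀ j ∈ e.2, i < j) ∧
   (∀ i ∈ e.1, ∀ j ∈ e.2, (∀ j' ∈ e.2, j ≤ j') → G.Adj i j))

/-- `e ∈ B_d`. -/
def InB (G : SimpleGraph (Fin n)) (d : ℕ) (e : Cell n) : Prop :=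
  IsBasisCell G e ∧ cellDeg e = d

/-- The underlying module of the resolution: the free `S`-module on all cells (the
resolution `F` is the submodule family spanned by the basis cells of each degree). -/
abbrev Ftot (n : ℕ) (k : Type) [Field k] := Cell n →₀ MvPolynomial (Fin n) k

variable (G : SimpleGraph (Fin n)) (k : Type) [Field k]

/-- The basis vector corresponding to a cell, where symbols that are not genuine
basis elements are interpreted as `0`. -/
def sym (e : Cell n) : Ftot n k :=
  if IsBasisCell G e then Finsupp.single e 1 else 0

/-- The differential on a basis cell: `d[{i}|{j}] = x_i x_j`, and for `|σ|+|τ| ≥ 3`,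
`d[σ|τ] = Σ_{i∈σ} (−1)^{|τ|+|{j∈σ : j>i}|} x_i [σ∖i|τ] + Σ_{i∈τ} (−1)^{|{j∈τ : j>i}|} x_i [σ|τ∖i]`. -/
def diffCell (e : Cell n) : Ftot n k :=
  if IsBasisCell G e then
    if e.1.card + e.2.card = 2 then
      (∏ i ∈ e.1 ∪ e.2, (X i : MvPolynomial (Fin n) k)) • sym G k ((∅, ∅) : Cell n)
    else if 3 ≤ e.1.card + e.2.card then
      (∑ i ∈ e.1,
        (((-1 : MvPolynomial (Fin n) k) ^ (e.2.card + (e.1.filter fun j => i < j).card)) * X i) •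
          sym G k (e.1.erase i, e.2))
      + (∑ i ∈ e.2,
        (((-1 : MvPolynomial (Fin n) k) ^ ((e.2.filter fun j => i < j).card)) * X i) •
          sym G k (e.1, e.2.erase i))
    else 0
  else 0

/-- The differential, as an `S`-linear endomorphism of the total module (it is zero in
degree `0` and on non-basis cells). -/
def Dmap : Ftot n k →ₗ[MvPolynomial (Fin n) k] Ftot n k :=
  Finsupp.lsum ℕ fun e => LinearMap.smulRight LinearMap.id (diffCell G k e)

/-- The submodule `F_d`: the span of the basis cells in `B_d`.  (`F` is the direct sum of
these, and `F_0 = S·[∅|∅] ≅ S`.) -/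
def Fsub (d : ℕ) : Submodule (MvPolynomial (Fin n) k) (Ftot n k) :=
  Submodule.span _ {f : Ftot n k | ∃ e : Cell n, InB G d e ∧ f = Finsupp.single e 1}

/-- The edge ideal `I_G`, generated by the `x_i x_j` for edges `ij` of `G`. -/
def edgeIdeal : Ideal (MvPolynomial (Fin n) k) :=
  Ideal.span {m | ∃ i j : Fin n, G.Adj i j ∧ m = X i * X j}

/-- The irrelevant maximal ideal `(x_1, …, x_n)`. -/
def irrIdeal (n : ℕ) (k : Type) [Field k] : Ideal (MvPolynomial (Fin n) k) :=
  Ideal.span (Set.range fun i : Fin n => (X i : MvPolynomial (Fin n) k))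

/-- The set of pairs `(i, j)` with `i < j`, `ij ∈ E(G)`, and `x_i x_j ∣ x^α`; i.e. the
elements `[{i}|{j}]` of `B₁` whose monomial divides `x^α`. -/
def DvdSet (α : Fin n →₀ ℕ) : Finset (Fin n × Fin n) :=
  Finset.univ.filter fun p => p.1 < p.2 ∧ G.Adj p.1 p.2 ∧ 1 ≤ α p.1 ∧ 1 ≤ α p.2

/-- `c` on a monomial `x^α ∈ F_0 = S`: zero if `x^α ∉ I_G`; otherwise
`(x^α/(x_i x_j))·[{i}|{j}]` for the `≺`-minimal `[{i}|{j}] ∈ B₁` with `x_i x_j ∣ x^α`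
(i.e. `j` is largest possible and then `i` smallest possible). -/
def cZero (α : Fin n →₀ ℕ) : Ftot n k :=
  if h : (DvdSet G α).Nonempty then
    let t := ((DvdSet G α).image Prod.snd).max' (h.image _)
    if h2 : ((((DvdSet G α).filter fun p => p.2 = t)).image Prod.fst).Nonempty then
      let s := ((((DvdSet G α).filter fun p => p.2 = t)).image Prod.fst).min' h2
      (monomial (α - Finsupp.single s 1 - Finsupp.single t 1) (1 : k)) • sym G k ({s}, {t})
    else 0
  else 0

/-- `C₁ = {i ∈ supp α : i > max τ}`. -/
def C1set (τ : Finset (Fin n)) (α : Fin n →₀ ℕ) : Finset (Fin n) :=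
  α.support.filter fun i => ∀ j ∈ τ, j < i

/-- `C₂ = {i ∈ supp α : i < min σ, {i, min τ} ∈ E(G)}`. -/
def C2set (σ τ : Finset (Fin n)) (α : Fin n →₀ ℕ) : Finset (Fin n) :=
  α.support.filter fun i =>
    (∀ s ∈ σ, i < s) ∧ ∀ j ∈ τ, (∀ j' ∈ τ, j ≤ j') → G.Adj i j

/-- `C₃ = {i ∈ supp α : i < min σ, i < max supp α, {i, max supp α} ∈ E(G)}`. -/
def C3set (σ : Finset (Fin n)) (α : Fin n →₀ ℕ) : Finset (Fin n) :=
  α.support.filter fun i =>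
    (∀ s ∈ σ, i < s) ∧ ∀ m ∈ α.support, (∀ m' ∈ α.support, m' ≤ m) → (i < m ∧ G.Adj i m)

/-- The value of the contracting homotopy `c` on the `k`-basis vector `x^α·e`. -/
def cMono (e : Cell n) (α : Fin n →₀ ℕ) : Ftot n k :=
  if IsBasisCell G e then
    if hτ : e.2.Nonempty then
      if e.2.card = 1 then
        -- `τ = {t}`
        let t := e.2.max' hτ
        if h1 : (C1set e.2 α).Nonempty then
          let m1 := (C1set e.2 α).max' h1
          (monomial (α - Finsupp.single m1 1) (1 : k)) • sym G k (e.1, insert m1 e.2)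
          + (if h3 : (C3set G e.1 α).Nonempty then
              let m3 := (C3set G e.1 α).min' h3
              ((-1 : MvPolynomial (Fin n) k) ^ (e.1.card + 1)) •
                ((monomial (α + Finsupp.single t 1 - Finsupp.single m1 1 - Finsupp.single m3 1)
                    (1 : k)) • sym G k (insert m3 e.1, ({m1} : Finset (Fin n))))
            else 0)
        else
          if h2 : (C2set G e.1 e.2 α).Nonempty then
            let m2 := (C2set G e.1 e.2 α).min' h2
            ((-1 : MvPolynomial (Fin n) k) ^ (e.1.card + 1)) •
              ((monomial (α - Finsupp.single m2 1) (1 : k)) • sym G k (insert m2 e.1, e.2))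
          else 0
      else
        -- `|τ| ≥ 2`
        if h1 : (C1set e.2 α).Nonempty then
          let m1 := (C1set e.2 α).max' h1
          (monomial (α - Finsupp.single m1 1) (1 : k)) • sym G k (e.1, insert m1 e.2)
        else 0
    else cZero G k α  -- the degree-0 basis cell `(∅, ∅)`
  else 0

/-- The `k`-basis of the total module, indexed by pairs (cell, monomial exponent). -/
def FBasis (n : ℕ) (k : Type) [Field k] :
    Module.Basis ((_ : Cell n) × (Fin n →₀ ℕ)) k (Ftot n k) :=
  Finsupp.basis fun _ => MvPolynomial.basisMonomials (Fin n) k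

/-- The contracting homotopy `c`, as a `k`-linear endomorphism of the total module. -/
def Cmap : Ftot n k →ₗ[k] Ftot n k :=
  (FBasis n k).constr ℕ fun p => cMono G k p.1 p.2

/-- The `S`-bilinear extension of a map defined on pairs of cells. -/
def biext (b : Cell n → Cell n → Ftot n k) (f g : Ftot n k) : Ftot n k :=
  ∑ e₁ ∈ f.support, ∑ e₂ ∈ g.support, (f e₁ * g e₂) • b e₁ e₂

/-- The product of two basis cells, defined recursively (with fuel, which suffices as each
recursive step lowers the total degree): `1 ⋆ 1 = 1`, and for `p + q ≥ 1`,
`e₁ ⋆ e₂ = c((d e₁) ⋆ e₂) + (−1)^p c(e₁ ⋆ (d e₂))`. -/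
def bstar : ℕ → Cell n → Cell n → Ftot n k
  | 0, _, _ => 0
  | N + 1, e₁, e₂ =>
    if cellDeg e₁ + cellDeg e₂ = 0 then Finsupp.single ((∅, ∅) : Cell n) 1
    else
      Cmap G k (biext k (fun a b => bstar N a b) (Dmap G k (Finsupp.single e₁ 1)) (Finsupp.single e₂ 1))
      + ((-1 : MvPolynomial (Fin n) k) ^ cellDeg e₁) •
          Cmap G k (biext k (fun a b => bstar N a b) (Finsupp.single e₁ 1) (Dmap G k (Finsupp.single e₂ 1)))

/-- The product `⋆` on the resolution, extended `S`-bilinearly from basis cells. -/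
def pstar (f g : Ftot n k) : Ftot n k := biext k (bstar G k (4 * n + 4)) f g

/-- The map `∂` on a basis cell: `∂[{i}|{j}] = x_i x_j`, and for `|σ|+|τ| ≥ 3`,
`∂[σ|τ] = x_{max τ}[σ|τ∖max τ] − (−1)^{|τ|+|σ|} x_{min σ}[σ∖min σ|τ]`. -/
def partialCell (e : Cell n) : Ftot n k :=
  if IsBasisCell G e then
    if e.1.card + e.2.card = 2 then
      (∏ i ∈ e.1 ∪ e.2, (X i : MvPolynomial (Fin n) k)) • sym G k ((∅, ∅) : Cell n)
    else if 3 ≤ e.1.card + e.2.card then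
      if h1 : e.1.Nonempty then
        if h2 : e.2.Nonempty then
          (X (e.2.max' h2) : MvPolynomial (Fin n) k) • sym G k (e.1, e.2.erase (e.2.max' h2))
          - ((-1 : MvPolynomial (Fin n) k) ^ (e.2.card + e.1.card)) •
              ((X (e.1.min' h1) : MvPolynomial (Fin n) k) •
                sym G k (e.1.erase (e.1.min' h1), e.2))
        else 0
      else 0
    else 0
  else 0

/-- The map `∂`, as an `S`-linear endomorphism of the total module. -/
def Pmap : Ftot n k →ₗ[MvPolynomial (Fin n) k] Ftot n k :=
  Finsupp.lsum ℕ fun e => LinearMap.smulRight LinearMap.id (partialCell G k e)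

/-- The `k`-linear projection `π` of `S` fixing each monomial not in `I_G` and
annihilating each monomial in `I_G`. -/
def piMap : MvPolynomial (Fin n) k →ₗ[k] MvPolynomial (Fin n) k :=
  (MvPolynomial.basisMonomials (Fin n) k).constr ℕ fun α =>
    if monomial α (1 : k) ∈ edgeIdeal G k then 0 else monomial α (1 : k)

/-- The `ℕⁿ`-multidegree of the basis vector `x^α [σ|τ]`: `α + Σ_{i ∈ σ∪τ} eᵢ`. -/
def mdeg (e : Cell n) (α : Fin n →₀ ℕ) : Fin n →₀ ℕ :=
  α + ∑ i ∈ e.1 ∪ e.2, Finsupp.single i 1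

/-- The `μ`-homogeneous component of the resolution (as a `k`-subspace). -/
def Hsub (μ : Fin n →₀ ℕ) : Submodule k (Ftot n k) :=
  Submodule.span k {f : Ftot n k |
    ∃ (e : Cell n) (α : Fin n →₀ ℕ), IsBasisCell G e ∧ mdeg e α = μ ∧
      f = Finsupp.single e (monomial α (1 : k))}

section DD

variable {n : ℕ} (G : SimpleGraph (Fin n)) (k : Type) [Field k]

lemma sym_of_not_basis {e : Cell n} (h : ¬ IsBasisCell G e) : sym G k e = 0 := if_neg h

lemma diffCell_of_not_basis {e : Cell n} (h : ¬ IsBasisCell G e) : diffCell G k e = 0 :=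
  if_neg h

lemma Dmap_single (e : Cell n) (p : MvPolynomial (Fin n) k) :
    Dmap G k (Finsupp.single e p) = p • diffCell G k e := by
  simp [Dmap, Finsupp.lsum_single, LinearMap.smulRight_apply]

lemma Dmap_sym (e : Cell n) : Dmap G k (sym G k e) = diffCell G k e := by
  by_cases h : IsBasisCell G e
  · rw [sym, if_pos h, Dmap_single, one_smul]
  · rw [sym_of_not_basis G k h, map_zero, diffCell_of_not_basis G k h]

lemma Dmap_smul_sym (c : MvPolynomial (Fin n) k) (e : Cell n) :
    Dmap G k (c • sym G k e) = c • diffCell G k e := by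
  rw [map_smul, Dmap_sym]

lemma not_basis_left {τ : Finset (Fin n)} (h : τ ≠ ∅) :
    ¬ IsBasisCell G ((∅, τ) : Cell n) := by
  rintro (h1 | h1)
  · rw [Prod.mk.injEq] at h1; exact h h1.2
  · simpa using h1.1

lemma not_basis_right {σ : Finset (Fin n)} (h : σ ≠ ∅) :
    ¬ IsBasisCell G ((σ, ∅) : Cell n) := by
  rintro (h1 | h1)
  · rw [Prod.mk.injEq] at h1; exact h h1.1
  · simpa using h1.2.1

lemma basis_erase_left {σ τ : Finset (Fin n)} (hb : IsBasisCell G ((σ, τ) : Cell n))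
    {i : Fin n} (hi : i ∈ σ) (hne : (σ.erase i).Nonempty) :
    IsBasisCell G ((σ.erase i, τ) : Cell n) := by
  rcases hb with h | ⟨h1, h2, h3, h4, h5⟩
  · rw [Prod.mk.injEq] at h; exact absurd (h.1 ▸ hi) (Finset.notMem_empty i)
  · refine Or.inr ⟨hne, h2, h3.mono_left (Finset.erase_subset _ _), ?_, ?_⟩
    · intro x hx j hj; exact h4 x (Finset.mem_of_mem_erase hx) j hj
    · intro x hx j hj hmin; exact h5 x (Finset.mem_of_mem_erase hx) j hj hmin

lemma basis_erase_right
    (hG : ∀ ⦃i t t' : Fin n⦄, i < t → t ≤ t' → G.Adj i t → G.Adj i t')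
    {σ τ : Finset (Fin n)} (hb : IsBasisCell G ((σ, τ) : Cell n))
    {j : Fin n} (hj : j ∈ τ) (hne : (τ.erase j).Nonempty) :
    IsBasisCell G ((σ, τ.erase j) : Cell n) := by
  rcases hb with h | ⟨h1, h2, h3, h4, h5⟩
  · rw [Prod.mk.injEq] at h; exact absurd (h.2 ▸ hj) (Finset.notMem_empty j)
  · refine Or.inr ⟨h1, hne, h3.mono_right (Finset.erase_subset _ _),
      fun x hx j' hj' => h4 x hx j' (Finset.mem_of_mem_erase hj'), ?_⟩
    intro x hx j₀ hj₀ _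
    have ht2 : τ.Nonempty := ⟨j, hj⟩
    have hadjt : G.Adj x (τ.min' ht2) :=
      h5 x hx (τ.min' ht2) (τ.min'_mem ht2) (fun j' hj' => τ.min'_le j' hj')
    exact hG (h4 x hx (τ.min' ht2) (τ.min'_mem ht2))
      (τ.min'_le j₀ (Finset.mem_of_mem_erase hj₀)) hadjt

lemma cigraph_adj_mono {n : ℕ} (a b : Fin n → ℝ) (hab : ∀ i, a i ≤ b i)
    (hmono : ∀ i j : Fin n, i < j → a i ≤ a j) :
    ∀ ⦃i t t' : Fin n⦄, i < t → t ≤ t' →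
      (cigraph n a b).Adj i t → (cigraph n a b).Adj i t' := by
  intro i t t' hit htt' hadj
  obtain ⟨hne, hdisj⟩ := hadj
  have hbi : b i < a t := by
    by_contra hcon
    push_neg at hcon
    exact (Set.disjoint_left.mp hdisj ⟨hmono i t hit, hcon⟩) ⟨le_refl _, hab t⟩
  have hatt' : a t ≤ a t' := by
    rcases eq_or_lt_of_le htt' with h | h
    · rw [h]
    · exact hmono _ _ h
  refine ⟨ne_of_lt (lt_of_lt_of_le hit htt'), ?_⟩
  rw [Set.disjoint_left]
  intro x hx hx2
  exact lt_irrefl x (lt_of_le_of_lt hx.2 (lt_of_lt_of_le hbi (le_trans hatt' hx2.1)))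

end DD


section DD2

variable {n : ℕ} (G : SimpleGraph (Fin n)) (k : Type) [Field k]

/-- The expanded formula for the differential in degrees `≥ 2`. -/
def fD (e : Cell n) : Ftot n k :=
  (∑ i ∈ e.1,
    (((-1 : MvPolynomial (Fin n) k) ^ (e.2.card + (e.1.filter fun j => i < j).card)) * X i) •
      sym G k (e.1.erase i, e.2))
  + (∑ i ∈ e.2,
    (((-1 : MvPolynomial (Fin n) k) ^ ((e.2.filter fun j => i < j).card)) * X i) •
      sym G k (e.1, e.2.erase i))

lemma diffCell_basis_three {e : Cell n} (hb : IsBasisCell G e)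
    (h3 : 3 ≤ e.1.card + e.2.card) : diffCell G k e = fD G k e := by
  rw [diffCell, if_pos hb, if_neg (by omega), if_pos h3]; rfl

lemma fD_left_empty {τ : Finset (Fin n)} (h : 2 ≤ τ.card) :
    fD G k ((∅, τ) : Cell n) = 0 := by
  rw [fD]
  simp only [Finset.sum_empty, zero_add]
  refine Finset.sum_eq_zero fun i hi => ?_
  rw [sym_of_not_basis G k (not_basis_left G ?_), smul_zero]
  have hc := Finset.card_erase_of_mem hi
  intro he
  rw [he, Finset.card_empty] at hc
  omega

lemma fD_right_empty {σ : Finset (Fin n)} (h : 2 ≤ σ.card) :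
    fD G k ((σ, ∅) : Cell n) = 0 := by
  rw [fD]
  simp only [Finset.sum_empty, add_zero]
  refine Finset.sum_eq_zero fun i hi => ?_
  rw [sym_of_not_basis G k (not_basis_right G ?_), smul_zero]
  have hc := Finset.card_erase_of_mem hi
  intro he
  rw [he, Finset.card_empty] at hc
  omega

lemma diffCell_erase_left {σ τ : Finset (Fin n)}
    (hb : IsBasisCell G ((σ, τ) : Cell n)) (hτ : τ.Nonempty)
    (h4 : 4 ≤ σ.card + τ.card) {i : Fin n} (hi : i ∈ σ) :
    diffCell G k ((σ.erase i, τ) : Cell n) = fD G k ((σ.erase i, τ) : Cell n) := by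
  have h1 : 1 ≤ σ.card := Finset.card_pos.mpr ⟨i, hi⟩
  rcases Finset.eq_empty_or_nonempty (σ.erase i) with he | hne
  · have hσ1 : σ.card = 1 := by
      have hc := Finset.card_erase_of_mem hi
      rw [he, Finset.card_empty] at hc
      omega
    rw [he, diffCell_of_not_basis G k (not_basis_left G hτ.ne_empty),
      fD_left_empty G k (by omega)]
  · refine diffCell_basis_three G k (basis_erase_left G hb hi hne) ?_
    show 3 ≤ (σ.erase i).card + τ.card
    rw [Finset.card_erase_of_mem hi]
    omega

lemma diffCell_erase_right
    (hG : ∀ ⦃i t t' : Fin n⦄, i < t → t ≤ t' → G.Adj i t → G.Adj i t')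
    {σ τ : Finset (Fin n)}
    (hb : IsBasisCell G ((σ, τ) : Cell n)) (hσ : σ.Nonempty)
    (h4 : 4 ≤ σ.card + τ.card) {j : Fin n} (hj : j ∈ τ) :
    diffCell G k ((σ, τ.erase j) : Cell n) = fD G k ((σ, τ.erase j) : Cell n) := by
  have h1 : 1 ≤ τ.card := Finset.card_pos.mpr ⟨j, hj⟩
  rcases Finset.eq_empty_or_nonempty (τ.erase j) with he | hne
  · have hτ1 : τ.card = 1 := by
      have hc := Finset.card_erase_of_mem hj
      rw [he, Finset.card_empty] at hc
      omega
    rw [he, diffCell_of_not_basis G k (not_basis_right G hσ.ne_empty),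
      fD_right_empty G k (by omega)]
  · refine diffCell_basis_three G k (basis_erase_right G hG hb hj hne) ?_
    show 3 ≤ σ.card + (τ.erase j).card
    rw [Finset.card_erase_of_mem hj]
    omega

end DD2


section DD3

variable {n : ℕ} (G : SimpleGraph (Fin n)) (k : Type) [Field k]

lemma antisym_sum (m : ℕ) (σ : Finset (Fin n)) (v : Fin n → Fin n → Ftot n k)
    (hv : ∀ i i', v i i' = v i' i) :
    ∑ i ∈ σ, ∑ i' ∈ σ.erase i,
      ((((-1 : MvPolynomial (Fin n) k) ^ (m + (σ.filter fun j => i < j).card)) * X i) *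
       (((-1 : MvPolynomial (Fin n) k) ^ (m + ((σ.erase i).filter fun j => i' < j).card)) * X i')) •
        v i i' = 0 := by
  have key : ∀ i ∈ σ, ∀ i' ∈ σ, i < i' →
      ((((-1 : MvPolynomial (Fin n) k) ^ (m + (σ.filter fun j => i < j).card)) * X i) *
       (((-1 : MvPolynomial (Fin n) k) ^ (m + ((σ.erase i).filter fun j => i' < j).card)) * X i')) •
        v i i'
      + ((((-1 : MvPolynomial (Fin n) k) ^ (m + (σ.filter fun j => i' < j).card)) * X i') *
       (((-1 : MvPolynomial (Fin n) k) ^ (m + ((σ.erase i').filter fun j => i < j).card)) * X i)) •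
        v i' i = 0 := by
    intro i hi i' hi' hii'
    have hB : (σ.erase i).filter (fun j => i' < j) = σ.filter fun j => i' < j := by
      rw [Finset.filter_erase, Finset.erase_eq_of_notMem]
      simp only [Finset.mem_filter, not_and]
      exact fun _ => not_lt.mpr hii'.le
    have hA : ((σ.erase i').filter fun j => i < j).card + 1
        = (σ.filter fun j => i < j).card := by
      rw [Finset.filter_erase, Finset.card_erase_of_mem (Finset.mem_filter.mpr ⟨hi', hii'⟩)]
      exact Nat.succ_pred_eq_of_pos
        (Finset.card_pos.mpr ⟨i', Finset.mem_filter.mpr ⟨hi', hii'⟩⟩)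
    rw [hv i' i, hB, ← hA, ← add_smul]
    convert zero_smul (MvPolynomial (Fin n) k) (v i i') using 2
    ring
  rw [Finset.sum_sigma']
  refine Finset.sum_involution (fun p _ => ⟨p.2, p.1⟩) ?_ ?_ ?_ ?_
  · rintro ⟨i, i'⟩ hp
    obtain ⟨hi, hi'e⟩ := Finset.mem_sigma.mp hp
    have hne : i' ≠ i := Finset.ne_of_mem_erase hi'e
    have hi' : i' ∈ σ := Finset.mem_of_mem_erase hi'e
    rcases lt_trichotomy i i' with h | h | h
    · exact key i hi i' hi' h
    · exact absurd h.symm hne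
    · rw [add_comm]; exact key i' hi' i hi h
  · rintro ⟨i, i'⟩ hp _ h
    exact Finset.ne_of_mem_erase (Finset.mem_sigma.mp hp).2 (congrArg Sigma.fst h)
  · rintro ⟨i, i'⟩ hp
    obtain ⟨hi, hi'e⟩ := Finset.mem_sigma.mp hp
    exact Finset.mem_sigma.mpr ⟨Finset.mem_of_mem_erase hi'e,
      Finset.mem_erase.mpr ⟨(Finset.ne_of_mem_erase hi'e).symm, hi⟩⟩
  · rintro ⟨i, i'⟩ _
    rfl

end DD3


section DD4

variable {n : ℕ} (G : SimpleGraph (Fin n)) (k : Type) [Field k]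

set_option maxHeartbeats 1600000 in
lemma DD_big
    (hG : ∀ ⦃i t t' : Fin n⦄, i < t → t ≤ t' → G.Adj i t → G.Adj i t')
    {σ τ : Finset (Fin n)} (hb : IsBasisCell G ((σ, τ) : Cell n))
    (hσ : σ.Nonempty) (hτ : τ.Nonempty) (h4 : 4 ≤ σ.card + τ.card) :
    Dmap G k (diffCell G k ((σ, τ) : Cell n)) = 0 := by
  rw [diffCell_basis_three G k hb (show 3 ≤ σ.card + τ.card by omega), fD]
  simp only [map_add, map_sum, Dmap_smul_sym]
  have e1 : ∑ x ∈ σ,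
        ((-1 : MvPolynomial (Fin n) k) ^ (τ.card + (Finset.filter (fun j => x < j) σ).card)
          * X x) • diffCell G k ((σ.erase x, τ) : Cell n)
      = ∑ x ∈ σ,
        ((-1 : MvPolynomial (Fin n) k) ^ (τ.card + (Finset.filter (fun j => x < j) σ).card)
          * X x) • fD G k ((σ.erase x, τ) : Cell n) :=
    Finset.sum_congr rfl fun x hx => by rw [diffCell_erase_left G k hb hτ h4 hx]
  have e2 : ∑ x ∈ τ,
        ((-1 : MvPolynomial (Fin n) k) ^ ((Finset.filter (fun j => x < j) τ).card)
          * X x) • diffCell G k ((σ, τ.erase x) : Cell n)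
      = ∑ x ∈ τ,
        ((-1 : MvPolynomial (Fin n) k) ^ ((Finset.filter (fun j => x < j) τ).card)
          * X x) • fD G k ((σ, τ.erase x) : Cell n) :=
    Finset.sum_congr rfl fun x hx => by rw [diffCell_erase_right G k hG hb hσ h4 hx]
  rw [e1, e2]
  simp only [fD, smul_add, Finset.smul_sum, smul_smul]
  rw [Finset.sum_add_distrib, Finset.sum_add_distrib]
  have hT1 : ∑ x ∈ σ,
      ∑ x_1 ∈ σ.erase x,
        ((-1 : MvPolynomial (Fin n) k) ^ (τ.card + (Finset.filter (fun j => x < j) σ).card)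
            * MvPolynomial.X x *
            ((-1) ^ (τ.card + (Finset.filter (fun j => x_1 < j) (σ.erase x)).card)
              * MvPolynomial.X x_1)) •
          sym G k (((σ.erase x).erase x_1, τ) : Cell n) = 0 :=
    antisym_sum k τ.card σ (fun i i' => sym G k (((σ.erase i).erase i', τ) : Cell n))
      (fun i i' => congrArg (fun s => sym G k ((s, τ) : Cell n)) Finset.erase_right_comm)
  have hT4' := antisym_sum k 0 τ (fun j j' => sym G k ((σ, (τ.erase j).erase j') : Cell n))
      (fun j j' => congrArg (fun s => sym G k ((σ, s) : Cell n)) Finset.erase_right_comm)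
  simp only [Nat.zero_add] at hT4'
  have hT4 : ∑ x ∈ τ,
      ∑ x_1 ∈ τ.erase x,
        ((-1 : MvPolynomial (Fin n) k) ^ ((Finset.filter (fun j => x < j) τ).card)
            * MvPolynomial.X x *
            ((-1) ^ ((Finset.filter (fun j => x_1 < j) (τ.erase x)).card)
              * MvPolynomial.X x_1)) •
          sym G k ((σ, (τ.erase x).erase x_1) : Cell n) = 0 := hT4'
  have hT3 : ∑ x ∈ τ,
      ∑ x_1 ∈ σ,
        ((-1 : MvPolynomial (Fin n) k) ^ ((Finset.filter (fun j => x < j) τ).card)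
            * MvPolynomial.X x *
            ((-1) ^ ((τ.erase x).card + (Finset.filter (fun j => x_1 < j) σ).card)
              * MvPolynomial.X x_1)) •
          sym G k ((σ.erase x_1, τ.erase x) : Cell n)
      = ∑ x_1 ∈ σ,
        ∑ x ∈ τ,
        ((-1 : MvPolynomial (Fin n) k) ^ ((Finset.filter (fun j => x < j) τ).card)
            * MvPolynomial.X x *
            ((-1) ^ ((τ.erase x).card + (Finset.filter (fun j => x_1 < j) σ).card)
              * MvPolynomial.X x_1)) •
          sym G k ((σ.erase x_1, τ.erase x) : Cell n) := Finset.sum_comm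
  rw [hT1, hT3, hT4, zero_add, add_zero, ← Finset.sum_add_distrib]
  refine Finset.sum_eq_zero fun i hi => ?_
  rw [← Finset.sum_add_distrib]
  refine Finset.sum_eq_zero fun j hj => ?_
  rw [← add_smul]
  convert zero_smul (MvPolynomial (Fin n) k) (sym G k ((σ.erase i, τ.erase j) : Cell n)) using 2
  rw [Finset.card_erase_of_mem hj]
  obtain ⟨m, hm⟩ : ∃ m, τ.card = m + 1 :=
    ⟨τ.card - 1, (Nat.succ_pred_eq_of_pos (Finset.card_pos.mpr ⟨j, hj⟩)).symm⟩
  rw [hm]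
  simp only [Nat.add_sub_cancel]
  ring

end DD4


section DD5

variable {n : ℕ} (G : SimpleGraph (Fin n)) (k : Type) [Field k]

lemma diffCell_pair {s t : Fin n} (hb : IsBasisCell G (({s}, {t}) : Cell n)) (hst : s ≠ t) :
    diffCell G k (({s}, {t}) : Cell n)
      = ((X s * X t : MvPolynomial (Fin n) k)) • sym G k ((∅, ∅) : Cell n) := by
  rw [diffCell, if_pos hb,
    if_pos (show (({s}, ({t} : Finset (Fin n))) : Cell n).1.card
      + (({s}, ({t} : Finset (Fin n))) : Cell n).2.card = 2 by simp)]
  congr 1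
  rw [show ({s} : Finset (Fin n)) ∪ {t} = insert s {t} by
      ext x; simp [or_comm],
    Finset.prod_insert (by simp [hst]), Finset.prod_singleton]

set_option maxHeartbeats 1600000 in
lemma DD_three
    (hG : ∀ ⦃i t t' : Fin n⦄, i < t → t ≤ t' → G.Adj i t → G.Adj i t')
    {σ τ : Finset (Fin n)} (hb : IsBasisCell G ((σ, τ) : Cell n))
    (hσ : σ.Nonempty) (hτ : τ.Nonempty) (h3 : σ.card + τ.card = 3) :
    Dmap G k (diffCell G k ((σ, τ) : Cell n)) = 0 := by
  have hσ1 : 1 ≤ σ.card := Finset.card_pos.mpr hσ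
  have hτ1 : 1 ≤ τ.card := Finset.card_pos.mpr hτ
  rw [diffCell_basis_three G k hb (show 3 ≤ σ.card + τ.card by omega), fD]
  simp only [map_add, map_sum, Dmap_smul_sym]
  rcases Nat.lt_or_ge σ.card 2 with hc | hc
  · -- σ.card = 1, τ.card = 2
    have hσc : σ.card = 1 := by omega
    have hτc : τ.card = 2 := by omega
    obtain ⟨s, rfl⟩ := Finset.card_eq_one.mp hσc
    obtain ⟨t1, t2, htne, rfl⟩ := Finset.card_eq_two.mp hτc
    have hE1 : ({t1, t2} : Finset (Fin n)).erase t1 = {t2} :=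
      Finset.erase_insert (by simp [htne])
    have hE2 : ({t1, t2} : Finset (Fin n)).erase t2 = {t1} := by
      rw [Finset.erase_insert_of_ne htne, Finset.erase_singleton]
      simp
    have hb2 : IsBasisCell G (({s}, ({t2} : Finset (Fin n))) : Cell n) := by
      have := basis_erase_right G hG hb (show t1 ∈ ({t1, t2} : Finset (Fin n)) by simp)
        (by rw [hE1]; exact Finset.singleton_nonempty t2)
      rwa [hE1] at this
    have hb1 : IsBasisCell G (({s}, ({t1} : Finset (Fin n))) : Cell n) := by
      have := basis_erase_right G hG hb (show t2 ∈ ({t1, t2} : Finset (Fin n)) by simp)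
        (by rw [hE2]; exact Finset.singleton_nonempty t1)
      rwa [hE2] at this
    have hlt : ∀ x ∈ ({s} : Finset (Fin n)), ∀ y ∈ ({t1, t2} : Finset (Fin n)), x < y := by
      rcases hb with h | ⟨_, _, _, h4, _⟩
      · rw [Prod.mk.injEq] at h
        exact absurd (h.1 ▸ Finset.mem_singleton_self s) (Finset.notMem_empty s)
      · exact h4
    have hst1 : s ≠ t1 := ne_of_lt (hlt s (by simp) t1 (by simp))
    have hst2 : s ≠ t2 := ne_of_lt (hlt s (by simp) t2 (by simp))
    rw [Finset.sum_singleton, Finset.erase_singleton,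
      diffCell_of_not_basis G k (not_basis_left G (by simp)), smul_zero, zero_add,
      Finset.sum_pair htne, hE1, hE2, diffCell_pair G k hb2 hst2,
      diffCell_pair G k hb1 hst1, smul_smul, smul_smul, ← add_smul]
    convert zero_smul (MvPolynomial (Fin n) k) (sym G k ((∅, ∅) : Cell n)) using 2
    rcases htne.lt_or_gt with h12 | h21
    · rw [show Finset.filter (fun j => t1 < j) ({t1, t2} : Finset (Fin n)) = {t2} by
          rw [Finset.filter_insert, if_neg (lt_irrefl t1), Finset.filter_singleton,
            if_pos h12],
        show Finset.filter (fun j => t2 < j) ({t1, t2} : Finset (Fin n)) = ∅ by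
          rw [Finset.filter_insert, if_neg (not_lt.mpr h12.le), Finset.filter_singleton,
            if_neg (lt_irrefl t2)],
        Finset.card_singleton, Finset.card_empty]
      ring
    · rw [show Finset.filter (fun j => t1 < j) ({t1, t2} : Finset (Fin n)) = ∅ by
          rw [Finset.filter_insert, if_neg (lt_irrefl t1), Finset.filter_singleton,
            if_neg (not_lt.mpr h21.le)],
        show Finset.filter (fun j => t2 < j) ({t1, t2} : Finset (Fin n)) = {t1} by
          rw [Finset.filter_insert, if_pos h21, Finset.filter_singleton,
            if_neg (lt_irrefl t2)]
          simp,
        Finset.card_singleton, Finset.card_empty]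
      ring
  · -- σ.card = 2, τ.card = 1
    have hσc : σ.card = 2 := by omega
    have hτc : τ.card = 1 := by omega
    obtain ⟨s1, s2, hsne, rfl⟩ := Finset.card_eq_two.mp hσc
    obtain ⟨t, rfl⟩ := Finset.card_eq_one.mp hτc
    have hE1 : ({s1, s2} : Finset (Fin n)).erase s1 = {s2} :=
      Finset.erase_insert (by simp [hsne])
    have hE2 : ({s1, s2} : Finset (Fin n)).erase s2 = {s1} := by
      rw [Finset.erase_insert_of_ne hsne, Finset.erase_singleton]
      simp
    have hb2 : IsBasisCell G ((({s2} : Finset (Fin n)), ({t} : Finset (Fin n))) : Cell n) := by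
      have := basis_erase_left G hb (show s1 ∈ ({s1, s2} : Finset (Fin n)) by simp)
        (by rw [hE1]; exact Finset.singleton_nonempty s2)
      rwa [hE1] at this
    have hb1 : IsBasisCell G ((({s1} : Finset (Fin n)), ({t} : Finset (Fin n))) : Cell n) := by
      have := basis_erase_left G hb (show s2 ∈ ({s1, s2} : Finset (Fin n)) by simp)
        (by rw [hE2]; exact Finset.singleton_nonempty s1)
      rwa [hE2] at this
    have hlt : ∀ x ∈ ({s1, s2} : Finset (Fin n)), ∀ y ∈ ({t} : Finset (Fin n)), x < y := by
      rcases hb with h | ⟨_, _, _, h4, _⟩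
      · rw [Prod.mk.injEq] at h
        exact absurd (h.2 ▸ Finset.mem_singleton_self t) (Finset.notMem_empty t)
      · exact h4
    have hs1t : s1 ≠ t := ne_of_lt (hlt s1 (by simp) t (by simp))
    have hs2t : s2 ≠ t := ne_of_lt (hlt s2 (by simp) t (by simp))
    rw [Finset.sum_singleton, Finset.erase_singleton,
      diffCell_of_not_basis G k (not_basis_right G (by simp)), smul_zero, add_zero,
      Finset.sum_pair hsne, hE1, hE2, diffCell_pair G k hb2 hs2t,
      diffCell_pair G k hb1 hs1t, smul_smul, smul_smul, ← add_smul]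
    convert zero_smul (MvPolynomial (Fin n) k) (sym G k ((∅, ∅) : Cell n)) using 2
    rw [Finset.card_singleton]
    rcases hsne.lt_or_gt with h12 | h21
    · rw [show Finset.filter (fun j => s1 < j) ({s1, s2} : Finset (Fin n)) = {s2} by
          rw [Finset.filter_insert, if_neg (lt_irrefl s1), Finset.filter_singleton,
            if_pos h12],
        show Finset.filter (fun j => s2 < j) ({s1, s2} : Finset (Fin n)) = ∅ by
          rw [Finset.filter_insert, if_neg (not_lt.mpr h12.le), Finset.filter_singleton,
            if_neg (lt_irrefl s2)],
        Finset.card_singleton, Finset.card_empty]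
      ring
    · rw [show Finset.filter (fun j => s1 < j) ({s1, s2} : Finset (Fin n)) = ∅ by
          rw [Finset.filter_insert, if_neg (lt_irrefl s1), Finset.filter_singleton,
            if_neg (not_lt.mpr h21.le)],
        show Finset.filter (fun j => s2 < j) ({s1, s2} : Finset (Fin n)) = {s1} by
          rw [Finset.filter_insert, if_pos h21, Finset.filter_singleton,
            if_neg (lt_irrefl s2)]
          simp,
        Finset.card_singleton, Finset.card_empty]
      ring

end DD5


section DD6

variable {n : ℕ} (G : SimpleGraph (Fin n)) (k : Type) [Field k]

lemma diffCell_empty : diffCell G k ((∅, ∅) : Cell n) = 0 := by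
  rw [diffCell, if_pos (show IsBasisCell G ((∅, ∅) : Cell n) from Or.inl rfl)]
  simp

lemma DD_cell
    (hG : ∀ ⦃i t t' : Fin n⦄, i < t → t ≤ t' → G.Adj i t → G.Adj i t')
    (e : Cell n) : Dmap G k (diffCell G k e) = 0 := by
  by_cases hbb : IsBasisCell G e
  · obtain ⟨σ, τ⟩ := e
    rcases hbb with htriv | hnon
    · rw [Prod.mk.injEq] at htriv
      obtain ⟨rfl, rfl⟩ := htriv
      rw [diffCell_empty, map_zero]
    · have hσ1 : 1 ≤ σ.card := Finset.card_pos.mpr hnon.1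
      have hτ1 : 1 ≤ τ.card := Finset.card_pos.mpr hnon.2.1
      rcases Nat.lt_or_ge (σ.card + τ.card) 3 with hc | hc
      · have h2 : ((σ, τ) : Cell n).1.card + ((σ, τ) : Cell n).2.card = 2 := by
          show σ.card + τ.card = 2
          omega
        rw [diffCell, if_pos (show IsBasisCell G ((σ, τ) : Cell n) from Or.inr hnon), if_pos h2, map_smul, Dmap_sym,
          diffCell_empty, smul_zero]
      · rcases Nat.lt_or_ge (σ.card + τ.card) 4 with hc4 | hc4
        · exact DD_three G k hG (Or.inr hnon) hnon.1 hnon.2.1 (by omega)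
        · exact DD_big G k hG (Or.inr hnon) hnon.1 hnon.2.1 hc4
  · rw [diffCell_of_not_basis G k hbb, map_zero]

end DD6



theorem stmt1 (n : ℕ) (hn : 1 ≤ n) (a b : Fin n → ℝ)
    (hab : ∀ i, a i ≤ b i) (hmono : ∀ i j : Fin n, i < j → a i ≤ a j)
    (k : Type) [Field k]
    (d : ℕ) (hd : 2 ≤ d) (f : Ftot n k) (hf : f ∈ Fsub (cigraph n a b) k d) :
    Dmap (cigraph n a b) k (Dmap (cigraph n a b) k f) = 0 := by
  have hG := cigraph_adj_mono a b hab hmono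
  induction hf using Submodule.span_induction with
  | mem x h =>
    obtain ⟨e, hInB, rfl⟩ := h
    rw [Dmap_single, one_smul, DD_cell (cigraph n a b) k hG e]
  | zero => rw [map_zero, map_zero]
  | add x y hx hy ihx ihy => rw [map_add, map_add, ihx, ihy, add_zero]
  | smul a x hx ihx => rw [map_smul, map_smul, ihx, smul_zero]

end EdgeRes
end
end

section
/- The homotopy c satisfies c ∘ c = 0, c(e) = 0 for every basis element e ∈ B_d (all d ≥ 0), and c preserves the ℕⁿ-multidegree, where the multidegree of x^α[σ|τ] is α + Σ_{i∈σ∪τ} e_i ∈ ℕⁿ (e_i the i-th standard basis vector). -/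
open Classical MvPolynomial Finsupp TensorProduct

set_option maxHeartbeats 1600000

noncomputable section

namespace EdgeRes

variable {n : ℕ}

variable (G : SimpleGraph (Fin n)) (k : Type) [Field k]

section Aux

variable {m : ℕ} {K : Type} [Field K]

lemma FBasis_apply (e : Cell m) (α : Fin m →₀ ℕ) :
    FBasis m K ⟨e, α⟩ = Finsupp.single e (monomial α (1:K)) := by
  rw [FBasis, Finsupp.coe_basis]; simp

lemma Cmap_single (G : SimpleGraph (Fin m)) (e : Cell m) (α : Fin m →₀ ℕ) (c : K) :
    Cmap G K (Finsupp.single e (monomial α c)) = c • cMono G K e α := by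
  have h : Finsupp.single e (monomial α c) = c • FBasis m K ⟨e, α⟩ := by
    rw [FBasis_apply, Finsupp.smul_single, MvPolynomial.smul_monomial, smul_eq_mul, mul_one]
  rw [h, map_smul, Cmap, Module.Basis.constr_basis]

lemma cMono_not_basis {G : SimpleGraph (Fin m)} {e : Cell m} (hb : ¬ IsBasisCell G e)
    (α : Fin m →₀ ℕ) : cMono G K e α = 0 := by rw [cMono, if_neg hb]

lemma Cmap_msym (G : SimpleGraph (Fin m)) (β : Fin m →₀ ℕ) (e' : Cell m) :
    Cmap G K ((monomial β (1:K) : MvPolynomial (Fin m) K) • sym G K e') = cMono G K e' β := by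
  by_cases hb : IsBasisCell G e'
  · rw [sym, if_pos hb, Finsupp.smul_single', mul_one, Cmap_single, one_smul]
  · rw [sym, if_neg hb, smul_zero, map_zero, cMono_not_basis hb]

lemma neg_one_pow_smul (p : ℕ) (x : Ftot m K) :
    ((-1 : MvPolynomial (Fin m) K) ^ p) • x = ((-1:K)^p) • x := by
  have h1 : (-1 : MvPolynomial (Fin m) K) = (-1:K) • (1 : MvPolynomial (Fin m) K) := by simp
  rw [h1, smul_pow, one_pow, smul_assoc, one_smul]

lemma mem_C1 {τ : Finset (Fin m)} {α : Fin m →₀ ℕ} {i : Fin m} :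
    i ∈ C1set τ α ↔ α i ≠ 0 ∧ ∀ j ∈ τ, j < i := by
  rw [C1set, Finset.mem_filter, Finsupp.mem_support_iff]

lemma mem_C2 {G : SimpleGraph (Fin m)} {σ τ : Finset (Fin m)} {α : Fin m →₀ ℕ} {i : Fin m} :
    i ∈ C2set G σ τ α ↔ α i ≠ 0 ∧ (∀ s ∈ σ, i < s) ∧
      ∀ j ∈ τ, (∀ j' ∈ τ, j ≤ j') → G.Adj i j := by
  rw [C2set, Finset.mem_filter, Finsupp.mem_support_iff]

lemma mem_C3 {G : SimpleGraph (Fin m)} {σ : Finset (Fin m)} {α : Fin m →₀ ℕ} {i : Fin m} :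
    i ∈ C3set G σ α ↔ α i ≠ 0 ∧ (∀ s ∈ σ, i < s) ∧
      ∀ j ∈ α.support, (∀ j' ∈ α.support, j' ≤ j) → (i < j ∧ G.Adj i j) := by
  rw [C3set, Finset.mem_filter, Finsupp.mem_support_iff]

lemma mem_Dvd {G : SimpleGraph (Fin m)} {α : Fin m →₀ ℕ} {p : Fin m × Fin m} :
    p ∈ DvdSet G α ↔ p.1 < p.2 ∧ G.Adj p.1 p.2 ∧ 1 ≤ α p.1 ∧ 1 ≤ α p.2 := by
  rw [DvdSet, Finset.mem_filter]
  simp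

lemma apply_ne_zero_of_sub {α β : Fin m →₀ ℕ} {i : Fin m}
    (h : (α - β : Fin m →₀ ℕ) i ≠ 0) : α i ≠ 0 := by
  rw [Finsupp.tsub_apply] at h; omega

lemma cMono_zero_of_C1_ne_one {G : SimpleGraph (Fin m)} {e : Cell m} {α : Fin m →₀ ℕ}
    (hτ : e.2.Nonempty) (hc : e.2.card ≠ 1) (h1 : ¬ (C1set e.2 α).Nonempty) :
    cMono G K e α = 0 := by
  by_cases hb : IsBasisCell G e
  · rw [cMono, if_pos hb, dif_pos hτ, if_neg hc, dif_neg h1]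
  · exact cMono_not_basis hb α

lemma cMono_zero_of_card_one {G : SimpleGraph (Fin m)} {e : Cell m} {α : Fin m →₀ ℕ}
    (hτ : e.2.Nonempty) (hc : e.2.card = 1) (h1 : ¬ (C1set e.2 α).Nonempty)
    (h2 : ¬ (C2set G e.1 e.2 α).Nonempty) : cMono G K e α = 0 := by
  by_cases hb : IsBasisCell G e
  · rw [cMono, if_pos hb, dif_pos hτ, if_pos hc]
    simp only [dif_neg h1, dif_neg h2]
  · exact cMono_not_basis hb α

end Aux
section Aux2

variable {m : ℕ} {K : Type} [Field K] {a b : Fin m → ℝ}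

lemma adj_bound (hab : ∀ i, a i ≤ b i) (hmono : ∀ i j : Fin m, i < j → a i ≤ a j)
    {i j : Fin m} (hij : i < j) (h : (cigraph m a b).Adj i j) : b i < a j := by
  by_contra h'
  push_neg at h'
  have h1 : a j ∈ Set.Icc (a i) (b i) := ⟨hmono i j hij, h'⟩
  have h2 : a j ∈ Set.Icc (a j) (b j) := ⟨le_refl _, hab j⟩
  exact Set.disjoint_left.mp h.2 h1 h2

lemma adj_of_le (hab : ∀ i, a i ≤ b i) (hmono : ∀ i j : Fin m, i < j → a i ≤ a j)
    {i j l : Fin m} (hij : i < j) (hjl : j ≤ l)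
    (h : (cigraph m a b).Adj i j) : (cigraph m a b).Adj i l := by
  have hb' : b i < a j := adj_bound hab hmono hij h
  have hal : a j ≤ a l := by
    rcases lt_or_eq_of_le hjl with h' | h'
    · exact hmono j l h'
    · rw [h']
  constructor
  · exact ne_of_lt (lt_of_lt_of_le hij hjl)
  · rw [Set.disjoint_left]
    rintro x ⟨_, hx2⟩ ⟨hx3, _⟩
    linarith

lemma C1_insert_empty {τ : Finset (Fin m)} {α : Fin m →₀ ℕ} (h1 : (C1set τ α).Nonempty) :
    ¬ (C1set (insert ((C1set τ α).max' h1) τ)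
        (α - Finsupp.single ((C1set τ α).max' h1) 1) : Finset (Fin m)).Nonempty := by
  rintro ⟨i, hi⟩
  rw [mem_C1] at hi
  have him : (C1set τ α).max' h1 < i := hi.2 _ (Finset.mem_insert_self _ _)
  have hαi : α i ≠ 0 := apply_ne_zero_of_sub hi.1
  have hmem : i ∈ C1set τ α :=
    mem_C1.mpr ⟨hαi, fun j hj => hi.2 j (Finset.mem_insert_of_mem hj)⟩
  exact absurd (Finset.le_max' _ _ hmem) (not_le.mpr him)

lemma cMono_zero_exponent (G : SimpleGraph (Fin m)) (e : Cell m) : cMono G K e 0 = 0 := by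
  by_cases hb : IsBasisCell G e
  · by_cases hτ : e.2.Nonempty
    · have hC1 : ¬ (C1set e.2 (0 : Fin m →₀ ℕ)).Nonempty := by
        simp [C1set]
      have hC2 : ¬ (C2set G e.1 e.2 (0 : Fin m →₀ ℕ)).Nonempty := by
        simp [C2set]
      by_cases hc : e.2.card = 1
      · exact cMono_zero_of_card_one hτ hc hC1 hC2
      · exact cMono_zero_of_C1_ne_one hτ hc hC1
    · have hD : ¬ (DvdSet G (0 : Fin m →₀ ℕ)).Nonempty := by
        rintro ⟨p, hp⟩
        rw [mem_Dvd] at hp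
        simp at hp
      rw [cMono, if_pos hb, dif_neg hτ, cZero, dif_neg hD]
  · exact cMono_not_basis hb 0

lemma mdeg_apply (e : Cell m) (α : Fin m →₀ ℕ) (j : Fin m) :
    mdeg e α j = α j + (if j ∈ e.1 ∪ e.2 then 1 else 0) := by
  rw [mdeg, Finsupp.add_apply]
  congr 1
  rw [Finset.sum_apply']
  simp [Finsupp.single_apply]

lemma smul_sym_mem {G : SimpleGraph (Fin m)} {μ : Fin m →₀ ℕ} (e' : Cell m) (β : Fin m →₀ ℕ)
    (h : mdeg e' β = μ) :
    (monomial β (1:K) : MvPolynomial (Fin m) K) • sym G K e' ∈ Hsub G K μ := by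
  by_cases hbc : IsBasisCell G e'
  · rw [sym, if_pos hbc, Finsupp.smul_single', mul_one]
    exact Submodule.subset_span ⟨e', β, hbc, h, rfl⟩
  · rw [sym, if_neg hbc, smul_zero]
    exact Submodule.zero_mem _

end Aux2
section Aux3

variable {m : ℕ} {K : Type} [Field K] {a b : Fin m → ℝ}

lemma Cmap_cZero (hab : ∀ i, a i ≤ b i) (hmono : ∀ i j : Fin m, i < j → a i ≤ a j)
    (α : Fin m →₀ ℕ) :
    Cmap (cigraph m a b) K (cZero (cigraph m a b) K α) = 0 := by
  set G := cigraph m a b with hG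
  by_cases h : (DvdSet G α).Nonempty
  swap
  · rw [cZero, dif_neg h, map_zero]
  rw [cZero, dif_pos h]
  set t := ((DvdSet G α).image Prod.snd).max' (h.image _) with htdef
  by_cases h2 : ((((DvdSet G α).filter fun p => p.2 = t)).image Prod.fst).Nonempty
  swap
  · simp only [dif_neg h2, map_zero]
  simp only [dif_pos h2]
  set s := ((((DvdSet G α).filter fun p => p.2 = t)).image Prod.fst).min' h2 with hsdef
  -- (s, t) ∈ DvdSet
  have hst : (s, t) ∈ DvdSet G α := by
    have hmem := Finset.min'_mem _ h2
    rw [← hsdef, Finset.mem_image] at hmem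
    obtain ⟨p, hp, hps⟩ := hmem
    rw [Finset.mem_filter] at hp
    have hpst : p = (s, t) := Prod.ext hps hp.2
    have hp1 := hp.1
    rwa [hpst] at hp1
  rw [mem_Dvd] at hst
  obtain ⟨hslt, hadj, hαs, hαt⟩ := hst
  rw [Cmap_msym]
  refine cMono_zero_of_card_one (Finset.singleton_nonempty t) (Finset.card_singleton t) ?_ ?_
  · rintro ⟨i, hi⟩
    rw [mem_C1] at hi
    have hti : t < i := hi.2 t (Finset.mem_singleton_self t)
    have hαi : α i ≠ 0 :=
      apply_ne_zero_of_sub (apply_ne_zero_of_sub hi.1)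
    have hsi : (s, i) ∈ DvdSet G α := by
      rw [mem_Dvd]
      exact ⟨lt_trans hslt hti, adj_of_le hab hmono hslt (le_of_lt hti) hadj,
        hαs, Nat.one_le_iff_ne_zero.mpr hαi⟩
    have : i ≤ t := Finset.le_max' _ _ (Finset.mem_image_of_mem Prod.snd hsi)
    exact absurd this (not_le.mpr hti)
  · rintro ⟨i, hi⟩
    rw [mem_C2] at hi
    obtain ⟨hβi, hilt, hiadj⟩ := hi
    have his : i < s := hilt s (Finset.mem_singleton_self s)
    have hαi : α i ≠ 0 := apply_ne_zero_of_sub (apply_ne_zero_of_sub hβi)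
    have hadjit : G.Adj i t := hiadj t (Finset.mem_singleton_self t)
      (fun j' hj' => by rw [Finset.mem_singleton] at hj'; rw [hj'])
    have hit : (i, t) ∈ DvdSet G α := by
      rw [mem_Dvd]
      exact ⟨lt_trans his hslt, hadjit, Nat.one_le_iff_ne_zero.mpr hαi, hαt⟩
    have hmem : i ∈ (((DvdSet G α).filter fun p => p.2 = t)).image Prod.fst := by
      exact Finset.mem_image.mpr ⟨(i, t), by rw [Finset.mem_filter]; exact ⟨hit, rfl⟩, rfl⟩
    exact absurd (Finset.min'_le _ _ hmem) (not_le.mpr his)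

end Aux3
section Aux4

variable {m : ℕ} {K : Type} [Field K] {a b : Fin m → ℝ}

lemma Cmap_cMono (hab : ∀ i, a i ≤ b i) (hmono : ∀ i j : Fin m, i < j → a i ≤ a j)
    (e : Cell m) (α : Fin m →₀ ℕ) :
    Cmap (cigraph m a b) K (cMono (cigraph m a b) K e α) = 0 := by
  set G := cigraph m a b with hG
  by_cases hb : IsBasisCell G e
  swap
  · rw [cMono_not_basis hb, map_zero]
  by_cases hτ : e.2.Nonempty
  swap
  · have hcz : cMono G K e α = cZero G K α := by rw [cMono, if_pos hb, dif_neg hτ]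
    rw [hcz]
    exact Cmap_cZero hab hmono α
  -- basis facts
  have hb' := hb
  rw [IsBasisCell] at hb'
  rcases hb' with h0 | ⟨hσ, -, hdisj, hord, hadj⟩
  · exfalso
    rw [h0] at hτ
    exact Finset.not_nonempty_empty hτ
  by_cases hc : e.2.card = 1
  · -- τ = {t}
    set t := e.2.max' hτ with htdef
    have ht : e.2 = {t} := by
      obtain ⟨x, hx⟩ := Finset.card_eq_one.mp hc
      have hmax : t ∈ e.2 := Finset.max'_mem _ hτ
      rw [hx, Finset.mem_singleton] at hmax
      rw [hx, hmax]
    by_cases h1 : (C1set e.2 α).Nonempty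
    · set m1 := (C1set e.2 α).max' h1 with hm1def
      have hm1 := Finset.max'_mem _ h1
      rw [mem_C1] at hm1
      obtain ⟨hm1α, hm1gt⟩ := hm1
      have htm1 : t < m1 := hm1gt t (by rw [ht]; exact Finset.mem_singleton_self t)
      have hm1τ : m1 ∉ e.2 := fun hmem => lt_irrefl m1 (hm1gt m1 hmem)
      have hAzero : cMono G K (e.1, insert m1 e.2) (α - Finsupp.single m1 1) = 0 := by
        refine cMono_zero_of_C1_ne_one (Finset.insert_nonempty _ _) ?_ (C1_insert_empty h1)
        rw [Finset.card_insert_of_notMem hm1τ, hc]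
        omega
      by_cases h3 : (C3set G e.1 α).Nonempty
      · set m3 := (C3set G e.1 α).min' h3 with hm3def
        have hm3 := Finset.min'_mem _ h3
        rw [mem_C3] at hm3
        obtain ⟨hm3α, hm3σ, hm3max⟩ := hm3
        obtain ⟨s0, hs0⟩ := hσ
        have hm3t : m3 < t := lt_trans (hm3σ s0 hs0) (hord s0 hs0 t (by rw [ht]; exact Finset.mem_singleton_self t))
        have hm3m1 : m3 < m1 := lt_trans hm3t htm1
        have hcm : cMono G K e α
            = (monomial (α - Finsupp.single m1 1) (1:K)) • sym G K (e.1, insert m1 e.2)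
            + ((-1 : MvPolynomial (Fin m) K) ^ (e.1.card + 1)) •
              ((monomial (α + Finsupp.single t 1 - Finsupp.single m1 1 - Finsupp.single m3 1)
                  (1:K)) • sym G K (insert m3 e.1, ({m1} : Finset (Fin m)))) := by
          rw [cMono, if_pos hb, dif_pos hτ, if_pos hc]
          simp only [dif_pos h1, dif_pos h3]
          rfl
        rw [hcm, map_add, Cmap_msym, hAzero, neg_one_pow_smul, map_smul, Cmap_msym]
        have hBzero : cMono G K (insert m3 e.1, ({m1} : Finset (Fin m)))
            (α + Finsupp.single t 1 - Finsupp.single m1 1 - Finsupp.single m3 1) = 0 := by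
          refine cMono_zero_of_card_one (Finset.singleton_nonempty m1) (Finset.card_singleton m1) ?_ ?_
          · rintro ⟨i, hi⟩
            rw [mem_C1] at hi
            have him : m1 < i := hi.2 m1 (Finset.mem_singleton_self m1)
            have hαi : α i ≠ 0 := by
              have hne := hi.1
              rw [Finsupp.tsub_apply, Finsupp.tsub_apply, Finsupp.add_apply,
                Finsupp.single_apply, Finsupp.single_apply, Finsupp.single_apply,
                if_neg (ne_of_lt (lt_trans htm1 him)),
                if_neg (ne_of_lt him), if_neg (ne_of_lt (lt_trans hm3m1 him))] at hne
              omega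
            have hmem : i ∈ C1set e.2 α := mem_C1.mpr ⟨hαi, by
              intro j hj
              rw [ht, Finset.mem_singleton] at hj
              rw [hj]
              exact lt_trans htm1 him⟩
            exact absurd (Finset.le_max' _ _ hmem) (not_le.mpr him)
          · rintro ⟨i, hi⟩
            rw [mem_C2] at hi
            obtain ⟨hβi, hilt, hiadj⟩ := hi
            have him3 : i < m3 := hilt m3 (Finset.mem_insert_self _ _)
            have hαi : α i ≠ 0 := by
              rw [Finsupp.tsub_apply, Finsupp.tsub_apply, Finsupp.add_apply,
                Finsupp.single_apply, Finsupp.single_apply, Finsupp.single_apply,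
                if_neg (ne_of_lt (lt_trans him3 hm3t)).symm,
                if_neg (ne_of_lt (lt_trans him3 hm3m1)).symm,
                if_neg (ne_of_lt him3).symm] at hβi
              omega
            have hadjm1 : G.Adj i m1 := hiadj m1 (Finset.mem_singleton_self m1)
              (fun j' hj' => by rw [Finset.mem_singleton] at hj'; rw [hj'])
            have hmem : i ∈ C3set G e.1 α := by
              rw [mem_C3]
              refine ⟨hαi, fun s hs => lt_trans him3 (hm3σ s hs), ?_⟩
              intro j hj hjmax
              have hm1j : m1 ≤ j := hjmax m1 (Finsupp.mem_support_iff.mpr hm1α)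
              have hjm1 : j ≤ m1 := by
                have : j ∈ C1set e.2 α := mem_C1.mpr ⟨Finsupp.mem_support_iff.mp hj, by
                  intro j' hj'
                  rw [ht, Finset.mem_singleton] at hj'
                  rw [hj']
                  exact lt_of_lt_of_le htm1 hm1j⟩
                exact Finset.le_max' _ _ this
              have hjeq : j = m1 := le_antisymm hjm1 hm1j
              rw [hjeq]
              exact ⟨lt_trans him3 hm3m1, hadjm1⟩
            exact absurd (Finset.min'_le _ _ hmem) (not_le.mpr him3)
        rw [hBzero, smul_zero, add_zero]
      · have hcm : cMono G K e α
            = (monomial (α - Finsupp.single m1 1) (1:K)) • sym G K (e.1, insert m1 e.2) := by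
          rw [cMono, if_pos hb, dif_pos hτ, if_pos hc]
          simp only [dif_pos h1, dif_neg h3, add_zero]
          rfl
        rw [hcm, Cmap_msym, hAzero]
    · by_cases h2 : (C2set G e.1 e.2 α).Nonempty
      · set m2 := (C2set G e.1 e.2 α).min' h2 with hm2def
        have hm2 := Finset.min'_mem _ h2
        rw [mem_C2] at hm2
        obtain ⟨hm2α, hm2σ, hm2adj⟩ := hm2
        have hcm : cMono G K e α
            = ((-1 : MvPolynomial (Fin m) K) ^ (e.1.card + 1)) •
              ((monomial (α - Finsupp.single m2 1) (1:K)) • sym G K (insert m2 e.1, e.2)) := by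
          rw [cMono, if_pos hb, dif_pos hτ, if_pos hc]
          simp only [dif_neg h1, dif_pos h2]
          rfl
        rw [hcm, neg_one_pow_smul, map_smul, Cmap_msym]
        have hzero : cMono G K (insert m2 e.1, e.2) (α - Finsupp.single m2 1) = 0 := by
          refine cMono_zero_of_card_one hτ hc ?_ ?_
          · rintro ⟨i, hi⟩
            rw [mem_C1] at hi
            have hαi : α i ≠ 0 := apply_ne_zero_of_sub hi.1
            exact h1 ⟨i, mem_C1.mpr ⟨hαi, hi.2⟩⟩
          · rintro ⟨i, hi⟩
            rw [mem_C2] at hi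
            obtain ⟨hβi, hilt, hiadj⟩ := hi
            have him2 : i < m2 := hilt m2 (Finset.mem_insert_self _ _)
            have hαi : α i ≠ 0 := apply_ne_zero_of_sub hβi
            have hmem : i ∈ C2set G e.1 e.2 α := mem_C2.mpr
              ⟨hαi, fun s hs => hilt s (Finset.mem_insert_of_mem hs), hiadj⟩
            exact absurd (Finset.min'_le _ _ hmem) (not_le.mpr him2)
        rw [hzero, smul_zero]
      · have hcm : cMono G K e α = 0 := by
          rw [cMono, if_pos hb, dif_pos hτ, if_pos hc]
          simp only [dif_neg h1, dif_neg h2]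
        rw [hcm, map_zero]
  · by_cases h1 : (C1set e.2 α).Nonempty
    · set m1 := (C1set e.2 α).max' h1 with hm1def
      have hm1 := Finset.max'_mem _ h1
      rw [mem_C1] at hm1
      have hm1τ : m1 ∉ e.2 := fun hmem => lt_irrefl m1 (hm1.2 m1 hmem)
      have hcm : cMono G K e α
          = (monomial (α - Finsupp.single m1 1) (1:K)) • sym G K (e.1, insert m1 e.2) := by
        rw [cMono, if_pos hb, dif_pos hτ, if_neg hc]
        simp only [dif_pos h1]
        rfl
      rw [hcm, Cmap_msym]
      refine cMono_zero_of_C1_ne_one (Finset.insert_nonempty _ _) ?_ (C1_insert_empty h1)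
      rw [Finset.card_insert_of_notMem hm1τ]
      have := Finset.card_pos.mpr hτ
      omega
    · have hcm : cMono G K e α = 0 := by
        rw [cMono, if_pos hb, dif_pos hτ, if_neg hc]
        simp only [dif_neg h1]
      rw [hcm, map_zero]

end Aux4
section Aux45

variable {m : ℕ} {K : Type} [Field K]

lemma mdeg_eq_insert2 {E : Cell m} {α : Fin m →₀ ℕ} {x : Fin m}
    (hα : α x ≠ 0) (h1 : x ∉ E.1) (h2 : x ∉ E.2) :
    mdeg (E.1, insert x E.2) (α - Finsupp.single x 1) = mdeg E α := by
  ext j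
  rw [mdeg_apply, mdeg_apply, Finsupp.tsub_apply, Finsupp.single_apply]
  simp only [Finset.mem_union, Finset.mem_insert]
  by_cases hj : x = j
  · subst hj
    rw [if_pos rfl, if_pos (Or.inr (Or.inl rfl)),
      if_neg (by rintro (h | h); exacts [h1 h, h2 h])]
    omega
  · rw [if_neg hj]
    have hiff : (j ∈ E.1 ∨ j = x ∨ j ∈ E.2) ↔ (j ∈ E.1 ∨ j ∈ E.2) := by
      constructor
      · rintro (h | h | h)
        · exact Or.inl h
        · exact absurd h.symm hj
        · exact Or.inr h
      · rintro (h | h)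
        · exact Or.inl h
        · exact Or.inr (Or.inr h)
    by_cases hmem : j ∈ E.1 ∨ j ∈ E.2
    · rw [if_pos (hiff.mpr hmem), if_pos hmem]
      omega
    · rw [if_neg (fun hh => hmem (hiff.mp hh)), if_neg hmem]
      omega

lemma mdeg_eq_insert1 {E : Cell m} {α : Fin m →₀ ℕ} {x : Fin m}
    (hα : α x ≠ 0) (h1 : x ∉ E.1) (h2 : x ∉ E.2) :
    mdeg (insert x E.1, E.2) (α - Finsupp.single x 1) = mdeg E α := by
  ext j
  rw [mdeg_apply, mdeg_apply, Finsupp.tsub_apply, Finsupp.single_apply]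
  simp only [Finset.mem_union, Finset.mem_insert]
  by_cases hj : x = j
  · subst hj
    rw [if_pos rfl, if_pos (Or.inl (Or.inl rfl)),
      if_neg (by rintro (h | h); exacts [h1 h, h2 h])]
    omega
  · rw [if_neg hj]
    have hiff : ((j = x ∨ j ∈ E.1) ∨ j ∈ E.2) ↔ (j ∈ E.1 ∨ j ∈ E.2) := by
      constructor
      · rintro ((h | h) | h)
        · exact absurd h.symm hj
        · exact Or.inl h
        · exact Or.inr h
      · rintro (h | h)
        · exact Or.inl (Or.inr h)
        · exact Or.inr h
    by_cases hmem : j ∈ E.1 ∨ j ∈ E.2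
    · rw [if_pos (hiff.mpr hmem), if_pos hmem]
      omega
    · rw [if_neg (fun hh => hmem (hiff.mp hh)), if_neg hmem]
      omega

lemma mdeg_eq_pair {α : Fin m →₀ ℕ} {s t : Fin m}
    (hs : α s ≠ 0) (ht : α t ≠ 0) (hst : s ≠ t) :
    mdeg (({s}, {t}) : Cell m) (α - Finsupp.single s 1 - Finsupp.single t 1)
      = mdeg ((∅, ∅) : Cell m) α := by
  ext j
  rw [mdeg_apply, mdeg_apply, Finsupp.tsub_apply, Finsupp.tsub_apply,
    Finsupp.single_apply, Finsupp.single_apply]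
  simp only [Finset.mem_union, Finset.mem_singleton, Finset.notMem_empty, or_self,
    if_false, add_zero]
  by_cases hjs : s = j
  · subst hjs
    rw [if_pos rfl, if_neg (fun h => hst h.symm), if_pos (Or.inl rfl)]
    omega
  · rw [if_neg hjs]
    by_cases hjt : t = j
    · subst hjt
      rw [if_pos rfl, if_pos (Or.inr rfl)]
      omega
    · rw [if_neg hjt, if_neg (by rintro (h | h); exacts [hjs h.symm, hjt h.symm])]
      omega

lemma mdeg_eq_B {E : Cell m} {α : Fin m →₀ ℕ} {t m1 m3 : Fin m}
    (hE2 : E.2 = {t})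
    (hm1 : α m1 ≠ 0) (hm3 : α m3 ≠ 0)
    (h31 : m3 ≠ m1) (h3t : m3 ≠ t) (ht1 : t ≠ m1)
    (htσ : t ∉ E.1) (h1σ : m1 ∉ E.1) (h3σ : m3 ∉ E.1) :
    mdeg (insert m3 E.1, ({m1} : Finset (Fin m)))
        (α + Finsupp.single t 1 - Finsupp.single m1 1 - Finsupp.single m3 1)
      = mdeg E α := by
  ext j
  rw [mdeg_apply, mdeg_apply, Finsupp.tsub_apply, Finsupp.tsub_apply, Finsupp.add_apply,
    Finsupp.single_apply, Finsupp.single_apply, Finsupp.single_apply, hE2]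
  simp only [Finset.mem_union, Finset.mem_insert, Finset.mem_singleton]
  by_cases hjt : t = j
  · subst hjt
    rw [if_pos rfl, if_neg (fun h => ht1 h.symm), if_neg h3t,
      if_neg (by rintro ((h | h) | h); exacts [h3t h.symm, htσ h, ht1 h]),
      if_pos (Or.inr rfl)]
    omega
  · rw [if_neg hjt]
    by_cases hjm1 : m1 = j
    · subst hjm1
      rw [if_pos rfl, if_neg h31, if_pos (Or.inr rfl),
        if_neg (by rintro (h | h); exacts [h1σ h, hjt h.symm])]
      omega
    · rw [if_neg hjm1]
      by_cases hjm3 : m3 = j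
      · subst hjm3
        rw [if_pos rfl, if_pos (Or.inl (Or.inl rfl)),
          if_neg (by rintro (h | h); exacts [h3σ h, hjt h.symm])]
        omega
      · rw [if_neg hjm3]
        have hiff1 : ((j = m3 ∨ j ∈ E.1) ∨ j = m1) ↔ j ∈ E.1 := by
          constructor
          · rintro ((h | h) | h)
            · exact absurd h.symm hjm3
            · exact h
            · exact absurd h.symm hjm1
          · exact fun h => Or.inl (Or.inr h)
        have hiff2 : (j ∈ E.1 ∨ j = t) ↔ j ∈ E.1 := by
          constructor
          · rintro (h | h)
            · exact h
            · exact absurd h.symm hjt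
          · exact fun h => Or.inl h
        by_cases hmem : j ∈ E.1
        · rw [if_pos (hiff1.mpr hmem), if_pos (hiff2.mpr hmem)]
          omega
        · rw [if_neg (fun hh => hmem (hiff1.mp hh)), if_neg (fun hh => hmem (hiff2.mp hh))]
          omega

end Aux45
section Aux5

variable {m : ℕ} {K : Type} [Field K]

lemma cMono_mem (G : SimpleGraph (Fin m)) (e : Cell m) (α : Fin m →₀ ℕ) :
    cMono G K e α ∈ Hsub G K (mdeg e α) := by
  by_cases hb : IsBasisCell G e
  swap
  · rw [cMono_not_basis hb]; exact Submodule.zero_mem _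
  by_cases hτ : e.2.Nonempty
  swap
  · have h0 : e = ((∅, ∅) : Cell m) := by
      rcases hb with h0 | ⟨-, h2, -⟩
      · exact h0
      · exact absurd h2 hτ
    have hcz : cMono G K e α = cZero G K α := by rw [cMono, if_pos hb, dif_neg hτ]
    rw [hcz]
    by_cases h : (DvdSet G α).Nonempty
    swap
    · rw [cZero, dif_neg h]; exact Submodule.zero_mem _
    rw [cZero, dif_pos h]
    set t := ((DvdSet G α).image Prod.snd).max' (h.image _) with htdef
    by_cases h2 : ((((DvdSet G α).filter fun p => p.2 = t)).image Prod.fst).Nonempty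
    swap
    · simp only [dif_neg h2]; exact Submodule.zero_mem _
    simp only [dif_pos h2]
    set s := ((((DvdSet G α).filter fun p => p.2 = t)).image Prod.fst).min' h2 with hsdef
    have hst : (s, t) ∈ DvdSet G α := by
      have hmem := Finset.min'_mem _ h2
      rw [← hsdef, Finset.mem_image] at hmem
      obtain ⟨p, hp, hps⟩ := hmem
      rw [Finset.mem_filter] at hp
      have hpst : p = (s, t) := Prod.ext hps hp.2
      have hp1 := hp.1
      rwa [hpst] at hp1
    rw [mem_Dvd] at hst
    obtain ⟨hslt, -, hαs, hαt⟩ := hst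
    refine smul_sym_mem _ _ ?_
    rw [h0]
    exact mdeg_eq_pair (Nat.one_le_iff_ne_zero.mp hαs) (Nat.one_le_iff_ne_zero.mp hαt) (ne_of_lt hslt)
  -- basis facts
  have hb' := hb
  rw [IsBasisCell] at hb'
  rcases hb' with h0 | ⟨hσ, -, hdisj, hord, hadj⟩
  · exfalso; rw [h0] at hτ; exact Finset.not_nonempty_empty hτ
  obtain ⟨t0, ht0⟩ := hτ
  have hτ : e.2.Nonempty := ⟨t0, ht0⟩
  by_cases hc : e.2.card = 1
  · set t := e.2.max' hτ with htdef
    have ht : e.2 = {t} := by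
      obtain ⟨x, hx⟩ := Finset.card_eq_one.mp hc
      have hmax : t ∈ e.2 := Finset.max'_mem _ hτ
      rw [hx, Finset.mem_singleton] at hmax
      rw [hx, hmax]
    have htmem : t ∈ e.2 := Finset.max'_mem _ hτ
    have htσ : t ∉ e.1 := fun hm => lt_irrefl t (hord t hm t htmem)
    by_cases h1 : (C1set e.2 α).Nonempty
    · set m1 := (C1set e.2 α).max' h1 with hm1def
      have hm1 := Finset.max'_mem _ h1
      rw [mem_C1] at hm1
      obtain ⟨hm1α, hm1gt⟩ := hm1
      have htm1 : t < m1 := hm1gt t htmem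
      have hm1τ : m1 ∉ e.2 := fun hmem => lt_irrefl m1 (hm1gt m1 hmem)
      have hm1σ : m1 ∉ e.1 := fun hm => lt_irrefl m1 (lt_trans (hord m1 hm t0 ht0) (hm1gt t0 ht0))
      have hM2 : mdeg (e.1, insert m1 e.2) (α - Finsupp.single m1 1) = mdeg e α :=
        mdeg_eq_insert2 hm1α hm1σ hm1τ
      by_cases h3 : (C3set G e.1 α).Nonempty
      · set m3 := (C3set G e.1 α).min' h3 with hm3def
        have hm3 := Finset.min'_mem _ h3
        rw [mem_C3] at hm3
        obtain ⟨hm3α, hm3σ, -⟩ := hm3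
        obtain ⟨s0, hs0⟩ := hσ
        have hm3t : m3 < t := lt_trans (hm3σ s0 hs0) (hord s0 hs0 t htmem)
        have hm3m1 : m3 < m1 := lt_trans hm3t htm1
        have hm3σ' : m3 ∉ e.1 := fun hm => lt_irrefl m3 (hm3σ m3 hm)
        have hcm : cMono G K e α
            = (monomial (α - Finsupp.single m1 1) (1:K)) • sym G K (e.1, insert m1 e.2)
            + ((-1 : MvPolynomial (Fin m) K) ^ (e.1.card + 1)) •
              ((monomial (α + Finsupp.single t 1 - Finsupp.single m1 1 - Finsupp.single m3 1)
                  (1:K)) • sym G K (insert m3 e.1, ({m1} : Finset (Fin m)))) := by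
          rw [cMono, if_pos hb, dif_pos hτ, if_pos hc]
          simp only [dif_pos h1, dif_pos h3]
          rfl
        rw [hcm]
        refine Submodule.add_mem _ (smul_sym_mem _ _ hM2) ?_
        rw [neg_one_pow_smul]
        exact Submodule.smul_mem _ _ (smul_sym_mem _ _
          (mdeg_eq_B ht hm1α hm3α (ne_of_lt hm3m1) (ne_of_lt hm3t) (ne_of_lt htm1)
            htσ hm1σ hm3σ'))
      · have hcm : cMono G K e α
            = (monomial (α - Finsupp.single m1 1) (1:K)) • sym G K (e.1, insert m1 e.2) := by
          rw [cMono, if_pos hb, dif_pos hτ, if_pos hc]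
          simp only [dif_pos h1, dif_neg h3, add_zero]
          rfl
        rw [hcm]
        exact smul_sym_mem _ _ hM2
    · by_cases h2 : (C2set G e.1 e.2 α).Nonempty
      · set m2 := (C2set G e.1 e.2 α).min' h2 with hm2def
        have hm2 := Finset.min'_mem _ h2
        rw [mem_C2] at hm2
        obtain ⟨hm2α, hm2σ, -⟩ := hm2
        have hm2σ' : m2 ∉ e.1 := fun hm => lt_irrefl m2 (hm2σ m2 hm)
        have hm2τ : m2 ∉ e.2 := by
          obtain ⟨s0, hs0⟩ := hσ
          exact fun hmem => lt_irrefl m2 (lt_trans (hm2σ s0 hs0) (hord s0 hs0 m2 hmem))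
        have hcm : cMono G K e α
            = ((-1 : MvPolynomial (Fin m) K) ^ (e.1.card + 1)) •
              ((monomial (α - Finsupp.single m2 1) (1:K)) • sym G K (insert m2 e.1, e.2)) := by
          rw [cMono, if_pos hb, dif_pos hτ, if_pos hc]
          simp only [dif_neg h1, dif_pos h2]
          rfl
        rw [hcm, neg_one_pow_smul]
        exact Submodule.smul_mem _ _ (smul_sym_mem _ _ (mdeg_eq_insert1 hm2α hm2σ' hm2τ))
      · have hcm : cMono G K e α = 0 := by
          rw [cMono, if_pos hb, dif_pos hτ, if_pos hc]
          simp only [dif_neg h1, dif_neg h2]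
        rw [hcm]
        exact Submodule.zero_mem _
  · by_cases h1 : (C1set e.2 α).Nonempty
    · set m1 := (C1set e.2 α).max' h1 with hm1def
      have hm1 := Finset.max'_mem _ h1
      rw [mem_C1] at hm1
      obtain ⟨hm1α, hm1gt⟩ := hm1
      have hm1τ : m1 ∉ e.2 := fun hmem => lt_irrefl m1 (hm1gt m1 hmem)
      have hm1σ : m1 ∉ e.1 := fun hm => lt_irrefl m1 (lt_trans (hord m1 hm t0 ht0) (hm1gt t0 ht0))
      have hcm : cMono G K e α
          = (monomial (α - Finsupp.single m1 1) (1:K)) • sym G K (e.1, insert m1 e.2) := by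
        rw [cMono, if_pos hb, dif_pos hτ, if_neg hc]
        simp only [dif_pos h1]
        rfl
      rw [hcm]
      exact smul_sym_mem _ _ (mdeg_eq_insert2 hm1α hm1σ hm1τ)
    · have hcm : cMono G K e α = 0 := by
        rw [cMono, if_pos hb, dif_pos hτ, if_neg hc]
        simp only [dif_neg h1]
      rw [hcm]
      exact Submodule.zero_mem _

end Aux5
theorem stmt5 (n : ℕ) (hn : 1 ≤ n) (a b : Fin n → ℝ)
    (hab : ∀ i, a i ≤ b i) (hmono : ∀ i j : Fin n, i < j → a i ≤ a j)
    (k : Type) [Field k] :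
    (∀ d : ℕ, ∀ f ∈ Fsub (cigraph n a b) k d, Cmap (cigraph n a b) k (Cmap (cigraph n a b) k f) = 0)
    ∧ (∀ e : Cell n, IsBasisCell (cigraph n a b) e → Cmap (cigraph n a b) k (Finsupp.single e 1) = 0)
    ∧ ∀ μ : Fin n →₀ ℕ, ∀ f ∈ Hsub (cigraph n a b) k μ, Cmap (cigraph n a b) k f ∈ Hsub (cigraph n a b) k μ := by
  have hcc : ∀ f : Ftot n k, Cmap (cigraph n a b) k (Cmap (cigraph n a b) k f) = 0 := by
    have hext : (Cmap (cigraph n a b) k) ∘ₗ (Cmap (cigraph n a b) k)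
        = (0 : Ftot n k →ₗ[k] Ftot n k) := by
      apply Module.Basis.ext (FBasis n k)
      rintro ⟨e, α⟩
      rw [LinearMap.comp_apply, LinearMap.zero_apply, FBasis_apply, Cmap_single, one_smul]
      exact Cmap_cMono hab hmono e α
    intro f
    have h := LinearMap.ext_iff.mp hext f
    simpa using h
  refine ⟨fun d f _ => hcc f, ?_, ?_⟩
  · intro e _
    have h1 : (Finsupp.single e (1 : MvPolynomial (Fin n) k))
        = Finsupp.single e (monomial 0 (1 : k)) := by
      rw [monomial_zero', map_one]
    rw [h1, Cmap_single, one_smul]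
    exact cMono_zero_exponent _ e
  · intro μ f hf
    refine Submodule.span_induction ?_ ?_ ?_ ?_ hf
    · rintro g ⟨e, α, hbe, hm, rfl⟩
      rw [Cmap_single, one_smul, ← hm]
      exact cMono_mem _ e α
    · rw [map_zero]
      exact Submodule.zero_mem _
    · intro x y _ _ hx hy
      rw [map_add]
      exact Submodule.add_mem _ hx hy
    · intro c x _ hx
      rw [map_smul]
      exact Submodule.smul_mem _ _ hx

end EdgeRes
end
end

section
/- Every S-linear map φ₀ : X₀ → Y₀ with φ₀(im d₁ᵡ) ⊆ im d₁ʸ has a unique lifting to a chain map φ : X → Y satisfying φ_n(1 ⊗ v) ∈ im c_{n-1} for all v ∈ V_n and all n ≥ 1; moreover this lifting is given inductively by φ_{n+1}(1 ⊗ v) = c_n(φ_n(d_{n+1}(1 ⊗ v))) for v ∈ V_{n+1}. -/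
open TensorProduct

private lemma extS {k S : Type*} [CommRing k] [CommRing S] [Algebra k S]
    {V N : Type*} [AddCommGroup V] [Module k V] [AddCommGroup N]
    [Module S N]
    (f g : (S ⊗[k] V) →ₗ[S] N) (h : ∀ v, f ((1 : S) ⊗ₜ[k] v) = g ((1 : S) ⊗ₜ[k] v)) :
    f = g := by
  ext x
  induction x using TensorProduct.induction_on with
  | zero => simp
  | tmul s v =>
    have hsv : s ⊗ₜ[k] v = s • ((1 : S) ⊗ₜ[k] v) := by
      rw [smul_tmul', smul_eq_mul, mul_one]
    rw [hsv, map_smul, map_smul, h]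
  | add x y hx hy => rw [map_add, map_add, hx, hy]

/-- MacLane-style lifting lemma: if `Y` has a contracting homotopy `c` with `c² = 0`,
then any `φ₀ : X₀ → Y₀` compatible with the images of the degree-1 differentials lifts
uniquely to a chain map `φ : X → Y` with `φₙ(1 ⊗ v) ∈ im c` for `n ≥ 1`; the lifting
is given inductively by `φ_{n+1}(1 ⊗ v) = c(φ_n(d(1 ⊗ v)))`. -/
theorem stmt6 (k : Type*) [CommRing k] (S : Type*) [CommRing S] [Algebra k S]
    (V W : ℕ → Type*)
    [∀ m, AddCommGroup (V m)] [∀ m, Module k (V m)]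
    [∀ m, AddCommGroup (W m)] [∀ m, Module k (W m)]
    (dX : ∀ m : ℕ, (S ⊗[k] V (m + 1)) →ₗ[S] S ⊗[k] V m)
    (dY : ∀ m : ℕ, (S ⊗[k] W (m + 1)) →ₗ[S] S ⊗[k] W m)
    (hX : ∀ m, (dX m).comp (dX (m + 1)) = 0)
    (hY : ∀ m, (dY m).comp (dY (m + 1)) = 0)
    (c : ∀ m : ℕ, (S ⊗[k] W m) →ₗ[k] S ⊗[k] W (m + 1))
    (hcc : ∀ m, (c (m + 1)).comp (c m) = 0)
    (hhom : ∀ m : ℕ, ∀ y : S ⊗[k] W (m + 1), dY (m + 1) (c (m + 1) y) + c m (dY m y) = y)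
    (hc0 : ∀ y : S ⊗[k] W 1, dY 0 (c 0 (dY 0 y)) = dY 0 y)
    (φ₀ : (S ⊗[k] V 0) →ₗ[S] S ⊗[k] W 0)
    (hφ₀ : ∀ x : S ⊗[k] V 1, ∃ y : S ⊗[k] W 1, dY 0 y = φ₀ (dX 0 x)) :
    (∃! φ : ∀ m, (S ⊗[k] V m) →ₗ[S] S ⊗[k] W m,
      φ 0 = φ₀ ∧ (∀ m, (dY m).comp (φ (m + 1)) = (φ m).comp (dX m)) ∧
        ∀ (m : ℕ) (v : V (m + 1)), φ (m + 1) ((1 : S) ⊗ₜ[k] v) ∈ Set.range (c m))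
    ∧ ∀ φ : ∀ m, (S ⊗[k] V m) →ₗ[S] S ⊗[k] W m,
        (φ 0 = φ₀ ∧ (∀ m, (dY m).comp (φ (m + 1)) = (φ m).comp (dX m)) ∧
          ∀ (m : ℕ) (v : V (m + 1)), φ (m + 1) ((1 : S) ⊗ₜ[k] v) ∈ Set.range (c m)) →
        ∀ (m : ℕ) (v : V (m + 1)),
          φ (m + 1) ((1 : S) ⊗ₜ[k] v) = c m (φ m (dX m ((1 : S) ⊗ₜ[k] v))) := by
  -- key: any chain map with range condition satisfies the inductive formula
  have key : ∀ φ : ∀ m, (S ⊗[k] V m) →ₗ[S] S ⊗[k] W m,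
      (∀ m, (dY m).comp (φ (m + 1)) = (φ m).comp (dX m)) →
      (∀ (m : ℕ) (v : V (m + 1)), φ (m + 1) ((1 : S) ⊗ₜ[k] v) ∈ Set.range (c m)) →
      ∀ (m : ℕ) (v : V (m + 1)),
        φ (m + 1) ((1 : S) ⊗ₜ[k] v) = c m (φ m (dX m ((1 : S) ⊗ₜ[k] v))) := by
    intro φ hchain hrange m v
    obtain ⟨y, hy⟩ := hrange m v
    have h1 := hhom m (φ (m + 1) ((1 : S) ⊗ₜ[k] v))
    have h2 : c (m + 1) (φ (m + 1) ((1 : S) ⊗ₜ[k] v)) = 0 := by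
      rw [← hy, ← LinearMap.comp_apply, hcc, LinearMap.zero_apply]
    rw [h2, map_zero, zero_add] at h1
    have h3 : dY m (φ (m + 1) ((1 : S) ⊗ₜ[k] v)) = φ m (dX m ((1 : S) ⊗ₜ[k] v)) :=
      LinearMap.congr_fun (hchain m) _
    rw [← h1, h3]
  -- construct the lifting
  let F : ∀ m, (S ⊗[k] V m) →ₗ[S] S ⊗[k] W m := fun m =>
    Nat.rec φ₀ (fun n φn => LinearMap.liftBaseChange S
      ((c n) ∘ₗ (φn.restrictScalars k) ∘ₗ ((dX n).restrictScalars k) ∘ₗ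
        (TensorProduct.mk k S (V (n + 1)) 1))) m
  have hF1 : ∀ (m : ℕ) (v : V (m + 1)),
      F (m + 1) ((1 : S) ⊗ₜ[k] v) = c m (F m (dX m ((1 : S) ⊗ₜ[k] v))) := by
    intro m v
    show LinearMap.liftBaseChange S _ ((1 : S) ⊗ₜ[k] v) = _
    rw [LinearMap.liftBaseChange_one_tmul]
    rfl
  have hchainF : ∀ m, (dY m).comp (F (m + 1)) = (F m).comp (dX m) := by
    intro m
    induction m with
    | zero =>
      apply extS
      intro v
      rw [LinearMap.comp_apply, LinearMap.comp_apply, hF1]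
      obtain ⟨y, hy⟩ := hφ₀ ((1 : S) ⊗ₜ[k] v)
      show dY 0 (c 0 (φ₀ (dX 0 ((1 : S) ⊗ₜ[k] v)))) = φ₀ (dX 0 ((1 : S) ⊗ₜ[k] v))
      rw [← hy, hc0]
    | succ n ih =>
      apply extS
      intro v
      rw [LinearMap.comp_apply, LinearMap.comp_apply, hF1]
      set z := F (n + 1) (dX (n + 1) ((1 : S) ⊗ₜ[k] v)) with hz
      have h1 := hhom n z
      have h2 : dY n z = 0 := by
        rw [hz, ← LinearMap.comp_apply, ih, LinearMap.comp_apply,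
          ← LinearMap.comp_apply (dX n), hX, LinearMap.zero_apply, map_zero]
      rw [h2, map_zero, add_zero] at h1
      exact h1
  have hrangeF : ∀ (m : ℕ) (v : V (m + 1)),
      F (m + 1) ((1 : S) ⊗ₜ[k] v) ∈ Set.range (c m) := fun m v => ⟨_, (hF1 m v).symm⟩
  constructor
  · refine ⟨F, ⟨rfl, hchainF, hrangeF⟩, ?_⟩
    rintro ψ ⟨hψ0, hψchain, hψrange⟩
    funext m
    induction m with
    | zero => exact hψ0
    | succ n ih =>
      apply extS
      intro v
      rw [key ψ hψchain hψrange n v, ih, hF1]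
  · rintro φ ⟨_, hchain, hrange⟩
    exact key φ hchain hrange
end
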